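/- (Noise features are noise) In the Gaussian mixture setting where x_{ij} are independent with variance 1 and mean μ_{ij} = 0 for all i whenever j > p*, for every noise feature j > p* and every partition C of {1,...,n}, the expected BCSS satisfies E[a_j(C)] = K − 1, where K is the number of clusters in C. -/

import Mathlib

open MeasureTheory ProbabilityTheory Finset

/-- Noise features are noise: if the `x_i` are independent with mean `0` and variance
`1`, then for every partition into `K` nonempty clusters, `E[a(C)] = K − 1`. -/
theorem stmt_11 {Ω : Type*} [MeasurableSpace Ω] (P : Measure Ω) [IsProbabilityMeasure P]
    (n K : ℕ) (hn : 0 < n) (x : Fin n → Ω → ℝ)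
    (hmeas : ∀ i, Measurable (x i))
    (hL2 : ∀ i, MemLp (x i) 2 P)
    (hindep : iIndepFun x P)
    (hmean : ∀ i, ∫ ω, x i ω ∂P = 0)
    (hvar : ∀ i, ∫ ω, (x i ω) ^ 2 ∂P = 1)
    (C : Fin K → Finset (Fin n))
    (hne : ∀ k, (C k).Nonempty)
    (hdisj : ∀ k k', k ≠ k' → Disjoint (C k) (C k'))
    (hcover : ∀ i : Fin n, ∃ k, i ∈ C k) :
    ∫ ω, (∑ k, (∑ i ∈ C k, x i ω) ^ 2 / ((C k).card : ℝ) -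
        (∑ i, x i ω) ^ 2 / (n : ℝ)) ∂P = K - 1 := by
  have hmul : ∀ i j : Fin n, Integrable (fun ω => x i ω * x j ω) P := by
    intro i j
    by_cases h : i = j
    · subst h; simpa [sq] using (hL2 i).integrable_sq
    · exact (hindep.indepFun h).integrable_mul ((hL2 i).integrable one_le_two)
        ((hL2 j).integrable one_le_two)
  have hintmul : ∀ i j : Fin n, ∫ ω, x i ω * x j ω ∂P = if i = j then 1 else 0 := by
    intro i j
    by_cases h : i = j
    · subst h
      simp only [if_true]
      simpa [sq] using hvar i
    · rw [if_neg h]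
      have hij : IndepFun (x i) (x j) P := hindep.indepFun h
      have h2 := hij.integral_mul_eq_mul_integral ((hmeas i).aestronglyMeasurable)
        ((hmeas j).aestronglyMeasurable)
      rw [hmean i, hmean j, mul_zero] at h2
      exact h2
  have key : ∀ S : Finset (Fin n),
      ∫ ω, (∑ i ∈ S, x i ω) ^ 2 ∂P = (S.card : ℝ) := by
    intro S
    have h1 : ∀ ω, (∑ i ∈ S, x i ω) ^ 2 = ∑ i ∈ S, ∑ j ∈ S, x i ω * x j ω := by
      intro ω; rw [sq, Finset.sum_mul_sum]
    simp only [h1]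
    rw [integral_finset_sum _ (fun i _ => integrable_finset_sum _ (fun j _ => hmul i j))]
    have : ∀ i ∈ S, (∫ ω, ∑ j ∈ S, x i ω * x j ω ∂P) = ∑ j ∈ S, ∫ ω, x i ω * x j ω ∂P :=
      fun i _ => integral_finset_sum _ (fun j _ => hmul i j)
    rw [Finset.sum_congr rfl this]
    simp only [hintmul]
    rw [Finset.sum_congr rfl
      (fun i hi => by rw [Finset.sum_ite_eq S i (fun _ => (1 : ℝ)), if_pos hi])]
    simp
  have hsqint : ∀ S : Finset (Fin n), Integrable (fun ω => (∑ i ∈ S, x i ω) ^ 2) P := by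
    intro S
    have : MemLp (fun ω => ∑ i ∈ S, x i ω) 2 P := memLp_finset_sum S (fun i _ => hL2 i)
    exact this.integrable_sq
  have hterm : ∀ S : Finset (Fin n), ∀ c : ℝ,
      Integrable (fun ω => (∑ i ∈ S, x i ω) ^ 2 / c) P := by
    intro S c
    simpa [div_eq_mul_inv] using (hsqint S).mul_const c⁻¹
  have hint1 : Integrable (fun ω => ∑ k, (∑ i ∈ C k, x i ω) ^ 2 / ((C k).card : ℝ)) P :=
    integrable_finset_sum _ (fun k _ => hterm (C k) _)
  rw [integral_sub hint1 (hterm Finset.univ _)]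
  rw [integral_finset_sum _ (fun k _ => hterm (C k) _)]
  have hdiv : ∀ (S : Finset (Fin n)) (c : ℝ),
      ∫ ω, (∑ i ∈ S, x i ω) ^ 2 / c ∂P = (S.card : ℝ) / c := by
    intro S c
    rw [div_eq_mul_inv, ← key S]
    simp [div_eq_mul_inv, integral_mul_const]
  simp only [hdiv]
  have hcard : ∀ k, ((C k).card : ℝ) ≠ 0 := fun k => by
    exact_mod_cast Finset.card_ne_zero_of_mem (hne k).choose_spec
  have hn' : ((n : ℝ)) ≠ 0 := by exact_mod_cast hn.ne'
  rw [Finset.sum_congr rfl (fun k _ => div_self (hcard k))]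
  simp [Finset.card_univ, div_self hn']
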